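/- In dimension 3, the twisted algebraic Weitzenböck relation holds: π_{j+1}(e_k)π⁺_j(e_l) - π⁺_j(e_k)π_j(e_l) = ((2j+3)/2)·π⁺_j([e_k,e_l]) as maps W_j → W_{j+1}, for all k, l ∈ {1,2,3}. -/

import Mathlib

/-- The Levi-Civita symbol on `Fin 3`. -/
def epsLC (i j k : Fin 3) : ℤ :=
  ((j.val : ℤ) - i.val) * ((k.val : ℤ) - j.val) * ((k.val : ℤ) - i.val) / 2

/-- `φ ⊗ e_k ∈ W ⊗ ℂ³`, with `W ⊗ ℂ³` modelled as `PiLp 2 (Fin 3 → W)`. -/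
noncomputable def tensE (W : Type*) [NormedAddCommGroup W] [InnerProductSpace ℂ W]
    (k : Fin 3) : W →ₗ[ℂ] PiLp 2 fun _ : Fin 3 => W :=
  (WithLp.linearEquiv 2 ℂ (∀ _ : Fin 3, W)).symm.toLinearMap ∘ₗ
    LinearMap.single ℂ (fun _ : Fin 3 => W) k

private lemma fin_mk_aux0 (h : (0:ℕ) < 3) : (⟨0, h⟩ : Fin 3) = (0 : Fin 3) := rfl
private lemma fin_mk_aux1 (h : (1:ℕ) < 3) : (⟨1, h⟩ : Fin 3) = (1 : Fin 3) := rfl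
private lemma fin_mk_aux2 (h : (2:ℕ) < 3) : (⟨2, h⟩ : Fin 3) = (2 : Fin 3) := rfl

private lemma comp_sum_aux {R M N P : Type*} {ι : Type*} [CommSemiring R]
    [AddCommMonoid M] [AddCommMonoid N] [AddCommMonoid P]
    [Module R M] [Module R N] [Module R P]
    (f : N →ₗ[R] P) (s : Finset ι) (g : ι → (M →ₗ[R] N)) :
    f ∘ₗ (∑ i ∈ s, g i) = ∑ i ∈ s, f ∘ₗ g i := by
  ext x; simp

private lemma sum_comp_aux {R M N P : Type*} {ι : Type*} [CommSemiring R]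
    [AddCommMonoid M] [AddCommMonoid N] [AddCommMonoid P]
    [Module R M] [Module R N] [Module R P]
    (f : M →ₗ[R] N) (s : Finset ι) (g : ι → (N →ₗ[R] P)) :
    (∑ i ∈ s, g i) ∘ₗ f = ∑ i ∈ s, g i ∘ₗ f := by
  ext x; simp [LinearMap.sum_apply]

set_option maxHeartbeats 1000000 in
/-- In dimension 3, the twisted algebraic Weitzenböck relation
`π_{j+1}(e_k)π⁺_j(e_l) - π⁺_j(e_k)π_j(e_l) = ((2j+3)/2)π⁺_j([e_k,e_l])` as maps
`W_j → W_{j+1}`, with `[e_k,e_l] = 2Σ_m ε_{klm} e_m` the `su(2)` bracket.  (Same setup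
and conventions as the algebraic Weitzenböck relations; `π_{j+1} = Ap` is the `su(2)`
action on `W_{j+1}` and `π_j = A` that on `W_j`.) -/
theorem twisted_algebraic_weitzenbock (j : ℕ)
    (W Wm Wp : Type*)
    [NormedAddCommGroup W] [InnerProductSpace ℂ W] [FiniteDimensional ℂ W]
    [NormedAddCommGroup Wm] [InnerProductSpace ℂ Wm] [FiniteDimensional ℂ Wm]
    [NormedAddCommGroup Wp] [InnerProductSpace ℂ Wp] [FiniteDimensional ℂ Wp]
    (hdW : Module.finrank ℂ W = 2 * j + 2)
    (hdm : Module.finrank ℂ Wm = 2 * j)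
    (hdp : Module.finrank ℂ Wp = 2 * j + 4)
    (A : Fin 3 → W →ₗ[ℂ] W) (Am : Fin 3 → Wm →ₗ[ℂ] Wm) (Ap : Fin 3 → Wp →ₗ[ℂ] Wp)
    (hAskew : ∀ k, LinearMap.adjoint (A k) = -A k)
    (hAmskew : ∀ k, LinearMap.adjoint (Am k) = -Am k)
    (hApskew : ∀ k, LinearMap.adjoint (Ap k) = -Ap k)
    (hAbr : ∀ k l, A k ∘ₗ A l - A l ∘ₗ A k = ∑ m, ((2 * epsLC k l m : ℤ) : ℂ) • A m)
    (hAmbr : ∀ k l, Am k ∘ₗ Am l - Am l ∘ₗ Am k = ∑ m, ((2 * epsLC k l m : ℤ) : ℂ) • Am m)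
    (hApbr : ∀ k l, Ap k ∘ₗ Ap l - Ap l ∘ₗ Ap k = ∑ m, ((2 * epsLC k l m : ℤ) : ℂ) • Ap m)
    (hcasW : ∑ i, A i ∘ₗ A i = (-((2 * (j : ℂ) + 1) * (2 * (j : ℂ) + 3))) • LinearMap.id)
    (hcasm : ∑ i, Am i ∘ₗ Am i = (-((2 * (j : ℂ) - 1) * (2 * (j : ℂ) + 1))) • LinearMap.id)
    (hcasp : ∑ i, Ap i ∘ₗ Ap i = (-((2 * (j : ℂ) + 3) * (2 * (j : ℂ) + 5))) • LinearMap.id)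
    (hirr : ∀ q : Submodule ℂ W, (∀ i, q.map (A i) ≤ q) → q = ⊥ ∨ q = ⊤)
    (ρT : Fin 3 → (PiLp 2 fun _ : Fin 3 => W) →ₗ[ℂ] (PiLp 2 fun _ : Fin 3 => W))
    (hρT : ∀ k f i, (WithLp.equiv 2 (∀ _ : Fin 3, W)) (ρT k f) i
      = A k ((WithLp.equiv 2 (∀ _ : Fin 3, W)) f i)
        + ∑ m, ((2 * epsLC k m i : ℤ) : ℂ) • (WithLp.equiv 2 (∀ _ : Fin 3, W)) f m)
    (ι0 : W →ₗ[ℂ] PiLp 2 fun _ : Fin 3 => W)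
    (ιm : Wm →ₗ[ℂ] PiLp 2 fun _ : Fin 3 => W)
    (ιp : Wp →ₗ[ℂ] PiLp 2 fun _ : Fin 3 => W)
    (h0iso : LinearMap.adjoint ι0 ∘ₗ ι0 = LinearMap.id)
    (hmiso : LinearMap.adjoint ιm ∘ₗ ιm = LinearMap.id)
    (hpiso : LinearMap.adjoint ιp ∘ₗ ιp = LinearMap.id)
    (hcomplete : ι0 ∘ₗ LinearMap.adjoint ι0 + ιm ∘ₗ LinearMap.adjoint ιm
      + ιp ∘ₗ LinearMap.adjoint ιp = LinearMap.id)
    (h0equiv : ∀ k, ι0 ∘ₗ A k = ρT k ∘ₗ ι0)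
    (hmequiv : ∀ k, ιm ∘ₗ Am k = ρT k ∘ₗ ιm)
    (hpequiv : ∀ k, ιp ∘ₗ Ap k = ρT k ∘ₗ ιp) :
    ∀ k l,
      Ap k ∘ₗ (((Real.sqrt (4 * ((j : ℝ) + 1) / (2 * (j : ℝ) + 3)) : ℝ) : ℂ) • (LinearMap.adjoint ιp ∘ₗ tensE W l)) - (((Real.sqrt (4 * ((j : ℝ) + 1) / (2 * (j : ℝ) + 3)) : ℝ) : ℂ) • (LinearMap.adjoint ιp ∘ₗ tensE W k)) ∘ₗ A l
      = ((2 * (j : ℂ) + 3) / 2) • ∑ m, ((2 * epsLC k l m : ℤ) : ℂ) • (((Real.sqrt (4 * ((j : ℝ) + 1) / (2 * (j : ℝ) + 3)) : ℝ) : ℂ) • (LinearMap.adjoint ιp ∘ₗ tensE W m)) := by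
  intro k l
  have heps : ∀ a b c : Fin 3, epsLC a b c = - epsLC a c b := by decide
  set T := LinearMap.adjoint ιp with hT
  -- component formula for tensE
  have hE : ∀ (m : Fin 3) (φ : W) (i : Fin 3),
      (WithLp.equiv 2 (∀ _ : Fin 3, W)) (tensE W m φ) i = if i = m then φ else 0 := by
    intro m φ i
    simp [tensE, Pi.single_apply]
  -- skew-adjointness of A transferred to inner products
  have hAin : ∀ (i : Fin 3) (u v : W), (inner ℂ (A i u) v : ℂ) = - inner ℂ u (A i v) := by
    intro i u v
    rw [← LinearMap.adjoint_inner_left, hAskew]; simp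
  -- ρT is skew-adjoint
  have hskew : ∀ i, LinearMap.adjoint (ρT i) = -(ρT i) := by
    intro i
    have h : -(ρT i) = LinearMap.adjoint (ρT i) := by
      rw [LinearMap.eq_adjoint_iff]
      intro x y
      simp only [LinearMap.neg_apply, inner_neg_left]
      rw [PiLp.inner_apply, PiLp.inner_apply]
      have hx := hρT i x
      have hy := hρT i y
      simp only [WithLp.equiv_apply] at hx hy
      simp only [hx, hy, inner_add_left, inner_add_right, inner_smul_left, inner_smul_right,
        inner_sum, sum_inner, Fin.sum_univ_three]
      simp only [map_intCast]
      rw [hAin i (x 0) (y 0), hAin i (x 1) (y 1), hAin i (x 2) (y 2)]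
      fin_cases i <;> norm_num [epsLC] <;> ring
    rw [← h]
  -- transfer of the equivariance through the adjoint
  have hF3 : ∀ i, Ap i ∘ₗ T = T ∘ₗ ρT i := by
    intro i
    have h := congrArg LinearMap.adjoint (hpequiv i)
    rw [LinearMap.adjoint_comp, LinearMap.adjoint_comp, hApskew, hskew] at h
    simp only [LinearMap.comp_neg, LinearMap.neg_comp, hT] at h ⊢
    exact neg_injective h
  -- commutation of ρT with tensE
  have hF1 : ∀ (i m : Fin 3), ρT i ∘ₗ tensE W m
      = tensE W m ∘ₗ A i + ∑ n, ((2 * epsLC i m n : ℤ) : ℂ) • tensE W n := by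
    intro i m
    apply LinearMap.ext; intro φ
    apply (WithLp.equiv 2 (∀ _ : Fin 3, W)).injective
    funext idx
    have hl := hρT i (tensE W m φ) idx
    simp only [LinearMap.comp_apply, LinearMap.add_apply, LinearMap.sum_apply,
      LinearMap.smul_apply]
    rw [hl]
    simp only [hE]
    have hrhs : ∀ (z : PiLp 2 fun _ : Fin 3 => W) (w : PiLp 2 fun _ : Fin 3 => W),
        (WithLp.equiv 2 (∀ _ : Fin 3, W)) (z + w) idx
          = (WithLp.equiv 2 (∀ _ : Fin 3, W)) z idx + (WithLp.equiv 2 (∀ _ : Fin 3, W)) w idx := by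
      intro z w; rfl
    have hsm : ∀ (c : ℂ) (z : PiLp 2 fun _ : Fin 3 => W),
        (WithLp.equiv 2 (∀ _ : Fin 3, W)) (c • z) idx
          = c • (WithLp.equiv 2 (∀ _ : Fin 3, W)) z idx := by
      intro c z; rfl
    simp only [Fin.sum_univ_three, hrhs, hsm, hE]
    fin_cases m <;> fin_cases idx <;>
      simp [map_zero] <;> norm_num [epsLC]
  -- the key one-step commutation for Q m := T ∘ₗ tensE W m
  have hstep : ∀ (i m : Fin 3), Ap i ∘ₗ (T ∘ₗ tensE W m)
      = (T ∘ₗ tensE W m) ∘ₗ A i + ∑ n, ((2 * epsLC i m n : ℤ) : ℂ) • (T ∘ₗ tensE W n) := by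
    intro i m
    rw [← LinearMap.comp_assoc, hF3 i, LinearMap.comp_assoc, hF1 i m, LinearMap.comp_add,
      comp_sum_aux]
    simp only [LinearMap.comp_smul, LinearMap.comp_assoc]
  -- Casimir on W transferred
  have hQA : ∀ m : Fin 3, ∑ i, ((T ∘ₗ tensE W m) ∘ₗ A i) ∘ₗ A i
      = (-((2 * (j : ℂ) + 1) * (2 * (j : ℂ) + 3))) • (T ∘ₗ tensE W m) := by
    intro m
    have h : ∑ i, ((T ∘ₗ tensE W m) ∘ₗ A i) ∘ₗ A i = (T ∘ₗ tensE W m) ∘ₗ (∑ i, A i ∘ₗ A i) := by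
      rw [comp_sum_aux]
      simp only [LinearMap.comp_assoc]
    rw [h, hcasW, LinearMap.comp_smul, LinearMap.comp_id]
  -- second-order expansion
  have h2 : ∀ (i m : Fin 3), Ap i ∘ₗ (Ap i ∘ₗ (T ∘ₗ tensE W m))
      = ((T ∘ₗ tensE W m) ∘ₗ A i) ∘ₗ A i
        + ∑ n, ((2 * epsLC i m n : ℤ) : ℂ) • ((T ∘ₗ tensE W n) ∘ₗ A i)
        + ∑ n, ((2 * epsLC i m n : ℤ) : ℂ) •
            ((T ∘ₗ tensE W n) ∘ₗ A i + ∑ p, ((2 * epsLC i n p : ℤ) : ℂ) • (T ∘ₗ tensE W p)) := by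
    intro i m
    rw [hstep i m, LinearMap.comp_add, comp_sum_aux]
    congr 1
    · rw [← LinearMap.comp_assoc, hstep i m, LinearMap.add_comp, sum_comp_aux]
      simp only [LinearMap.smul_comp]
    · refine Finset.sum_congr rfl fun n _ => ?_
      rw [LinearMap.comp_smul, hstep i n]
  -- the starred identity
  have star : ∀ m : Fin 3, ∑ i, ∑ n, ((2 * epsLC i m n : ℤ) : ℂ) • ((T ∘ₗ tensE W n) ∘ₗ A i)
      = ((-2) * (2 * (j : ℂ) + 1)) • (T ∘ₗ tensE W m) := by
    intro m
    have keym : ∑ i, Ap i ∘ₗ (Ap i ∘ₗ (T ∘ₗ tensE W m))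
        = (-((2 * (j : ℂ) + 3) * (2 * (j : ℂ) + 5))) • (T ∘ₗ tensE W m) := by
      have h : ∑ i, Ap i ∘ₗ (Ap i ∘ₗ (T ∘ₗ tensE W m))
          = (∑ i, Ap i ∘ₗ Ap i) ∘ₗ (T ∘ₗ tensE W m) := by
        rw [sum_comp_aux]
        simp only [LinearMap.comp_assoc]
      rw [h, hcasp, LinearMap.smul_comp, LinearMap.id_comp]
    rw [Fin.sum_univ_three] at keym
    rw [h2 0 m, h2 1 m, h2 2 m] at keym
    have hQAm := hQA m
    rw [Fin.sum_univ_three] at hQAm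
    simp only [Fin.sum_univ_three] at keym ⊢
    fin_cases m <;>
    · norm_num [epsLC, fin_mk_aux0, fin_mk_aux1, fin_mk_aux2] at keym hQAm ⊢
      linear_combination (norm := module) ((1:ℂ)/2) • keym - ((1:ℂ)/2) • hQAm
  -- the commutator identity
  have hcomm : ∀ (a b : Fin 3), (T ∘ₗ tensE W b) ∘ₗ A a - (T ∘ₗ tensE W a) ∘ₗ A b
      = ((2 * (j : ℂ) + 1) / 2) • ∑ m, ((2 * epsLC a b m : ℤ) : ℂ) • (T ∘ₗ tensE W m) := by
    intro a b
    have s0 := star 0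
    have s1 := star 1
    have s2 := star 2
    simp only [Fin.sum_univ_three] at s0 s1 s2 ⊢
    fin_cases a <;> fin_cases b <;>
      norm_num [epsLC, fin_mk_aux0, fin_mk_aux1, fin_mk_aux2] at s0 s1 s2 ⊢ <;>
      first
        | module
        | linear_combination (norm := module) ((1:ℂ)/2) • s0
        | linear_combination (norm := module) (-(1:ℂ)/2) • s0
        | linear_combination (norm := module) ((1:ℂ)/2) • s1
        | linear_combination (norm := module) (-(1:ℂ)/2) • s1
        | linear_combination (norm := module) ((1:ℂ)/2) • s2
        | linear_combination (norm := module) (-(1:ℂ)/2) • s2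
  -- final assembly
  have hs := hstep k l
  have hc := hcomm k l
  simp only [Fin.sum_univ_three] at hs hc ⊢
  rw [LinearMap.comp_smul, LinearMap.smul_comp]
  linear_combination (norm := module)
    (((Real.sqrt (4 * ((j : ℝ) + 1) / (2 * (j : ℝ) + 3)) : ℝ) : ℂ)) • hs
      + (((Real.sqrt (4 * ((j : ℝ) + 1) / (2 * (j : ℝ) + 3)) : ℝ) : ℂ)) • hc
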